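/- Let X and Y be finitely ramified fractals equipped with undistorted metrics, and let f : X → Y be a piecewise cellular homeomorphism. Then f is a quasisymmetry. -/

import Mathlib

open Set

/-- A finitely ramified cell structure on a topological space `X`: a locally finite,
level-indexed family of "cells", where each cell is compact, connected, with nonempty
interior, the unique `0`-cell is all of `X`, every `(n+1)`-cell lies in some `n`-cell,
each `n`-cell is the union of the `(n+1)`-cells it contains, two distinct cells of the
same level meet in a finite set, and every infinite descending chain of cells
intersects in a single point. -/
structure CellStructure (X : Type*) [TopologicalSpace X] where
  cells : ℕ → Set (Set X)
  finite_cells : ∀ n, (cells n).Finite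
  isCompact_cells : ∀ n, ∀ E ∈ cells n, IsCompact E
  isConnected_cells : ∀ n, ∀ E ∈ cells n, IsConnected E
  interior_nonempty : ∀ n, ∀ E ∈ cells n, (interior E).Nonempty
  root : cells 0 = {Set.univ}
  exists_parent : ∀ n, ∀ E' ∈ cells (n + 1), ∃ E ∈ cells n, E' ⊆ E
  eq_sUnion_children : ∀ n, ∀ E ∈ cells n, E = ⋃₀ {E' | E' ∈ cells (n + 1) ∧ E' ⊆ E}
  inter_finite : ∀ n, ∀ E₁ ∈ cells n, ∀ E₂ ∈ cells n, E₁ ≠ E₂ → (E₁ ∩ E₂).Finite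
  descending_singleton : ∀ E : ℕ → Set X, (∀ n, E n ∈ cells n) → (∀ n, E (n + 1) ⊆ E n) →
    ∃ p : X, (⋂ n, E n) = {p}

/-- `d` is a metric (distance function) on the set `X`. -/
def IsMetricOn {X : Type*} (d : X → X → ℝ) : Prop :=
  (∀ x y, 0 ≤ d x y) ∧ (∀ x y, d x y = 0 ↔ x = y) ∧ (∀ x y, d x y = d y x) ∧
    ∀ x y z, d x z ≤ d x y + d y z

/-- The distance function `d` induces the given topology on `X`. -/
def InducesTopology {X : Type*} [TopologicalSpace X] (d : X → X → ℝ) : Prop :=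
  ∀ s : Set X, IsOpen s ↔ ∀ x ∈ s, ∃ ε > 0, ∀ y, d x y < ε → y ∈ s

/-- The diameter of a set with respect to a distance function. -/
noncomputable def sdiam {X : Type*} (d : X → X → ℝ) (S : Set X) : ℝ :=
  sSup (Set.image2 d S S)

/-- The distance between two sets with respect to a distance function. -/
noncomputable def sdist {X : Type*} (d : X → X → ℝ) (S T : Set X) : ℝ :=
  sInf (Set.image2 d S T)

/-- The distance function `d` is `(r,R,C,δ)`-undistorted with respect to the family
of cells `cells`: exponential decay of diameter ratios of intersecting cells, and
cell separation for disjoint cells of the same level. -/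
def IsUndistortedWith {X : Type*} (cells : ℕ → Set (Set X)) (d : X → X → ℝ)
    (r R C δ : ℝ) : Prop :=
  0 < r ∧ r ≤ R ∧ R < 1 ∧ 1 ≤ C ∧ 0 < δ ∧
    (∀ m n : ℕ, m ≤ n → ∀ E ∈ cells m, ∀ E' ∈ cells n, (E ∩ E').Nonempty →
      r ^ (n - m) / C ≤ sdiam d E' / sdiam d E ∧
        sdiam d E' / sdiam d E ≤ C * R ^ (n - m)) ∧
    ∀ n : ℕ, ∀ E₁ ∈ cells n, ∀ E₂ ∈ cells n, Disjoint E₁ E₂ →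
      δ * sdiam d E₁ ≤ sdist d E₁ E₂

/-- `d` is undistorted if it is `(r,R,C,δ)`-undistorted for some constants. -/
def IsUndistorted {X : Type*} (cells : ℕ → Set (Set X)) (d : X → X → ℝ) : Prop :=
  ∃ r R C δ : ℝ, IsUndistortedWith cells d r R C δ

/-- `η` is a homeomorphism of `[0,∞)` onto itself (equivalently: a continuous,
strictly increasing surjection of `[0,∞)` onto `[0,∞)` fixing `0`). -/
def IsQSGauge (η : ℝ → ℝ) : Prop :=
  ContinuousOn η (Set.Ici 0) ∧ StrictMonoOn η (Set.Ici 0) ∧ η 0 = 0 ∧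
    Set.MapsTo η (Set.Ici 0) (Set.Ici 0) ∧ Set.SurjOn η (Set.Ici 0) (Set.Ici 0)

/-- The `η`-quasisymmetry inequality for a map `f` between sets carrying
distance functions `dX` and `dY`. -/
def QSIneq {X Y : Type*} (dX : X → X → ℝ) (dY : Y → Y → ℝ) (f : X → Y) (η : ℝ → ℝ) : Prop :=
  ∀ a b c : X, a ≠ b → a ≠ c → b ≠ c →
    dY (f a) (f b) / dY (f a) (f c) ≤ η (dX a b / dX a c)


/-- `g` restricts to a cellular homeomorphism from the `m`-cell `E` of `X` onto the
`n`-cell `M` of `Y`. -/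
def CellularMap {X Y : Type*} [TopologicalSpace X] [TopologicalSpace Y]
    (CSX : CellStructure X) (CSY : CellStructure Y) (g : X → Y)
    (m n : ℕ) (E : Set X) (M : Set Y) : Prop :=
  E ∈ CSX.cells m ∧ M ∈ CSY.cells n ∧ Set.InjOn g E ∧ ContinuousOn g E ∧ g '' E = M ∧
    (∀ k : ℕ, ∀ F ∈ CSX.cells (m + k), F ⊆ E → g '' F ∈ CSY.cells (n + k)) ∧
    (∀ k : ℕ, ∀ F' ∈ CSY.cells (n + k), F' ⊆ M → ∃ F ∈ CSX.cells (m + k), F ⊆ E ∧ g '' F = F')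

/-- `f` is piecewise cellular: there are subdivisions of `X` and `Y` into finitely
many cells (none contained in another, covering the space) such that `f` maps
corresponding pieces by cellular homeomorphisms. -/
def PiecewiseCellular {X Y : Type*} [TopologicalSpace X] [TopologicalSpace Y]
    (CSX : CellStructure X) (CSY : CellStructure Y) (f : X → Y) : Prop :=
  ∃ (k : ℕ) (EX : Fin k → ℕ × Set X) (EY : Fin k → ℕ × Set Y),
    (∀ i, (EX i).2 ∈ CSX.cells (EX i).1) ∧ (∀ i, (EY i).2 ∈ CSY.cells (EY i).1) ∧
    (∀ i j, i ≠ j → ¬(EX i).2 ⊆ (EX j).2) ∧ (∀ i j, i ≠ j → ¬(EY i).2 ⊆ (EY j).2) ∧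
    (⋃ i, (EX i).2) = Set.univ ∧ (⋃ i, (EY i).2) = Set.univ ∧
    ∀ i, CellularMap CSX CSY f (EX i).1 (EY i).1 (EX i).2 (EY i).2


namespace Stmt12Aux

open Set

variable {X Y : Type*}

/-! ### Basic metric facts -/

lemma dist_pos {d : X → X → ℝ} (hmet : IsMetricOn d) {x y : X} (h : x ≠ y) :
    0 < d x y := by
  rcases (hmet.1 x y).lt_or_eq with h' | h'
  · exact h'
  · exact absurd ((hmet.2.1 x y).mp h'.symm) h

lemma exists_bound [TopologicalSpace X] [CompactSpace X] {d : X → X → ℝ}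
    (hmet : IsMetricOn d) (htop : InducesTopology d) :
    ∃ M : ℝ, ∀ x y, d x y ≤ M := by
  obtain ⟨hpos, heq, hsymm, htri⟩ := hmet
  have hopen : ∀ x : X, IsOpen {y | d x y < 1} := by
    intro x
    rw [htop]
    intro z hz
    simp only [mem_setOf_eq] at hz
    refine ⟨1 - d x z, by linarith, fun w hw => ?_⟩
    have := htri x z w
    simp only [mem_setOf_eq]
    linarith
  obtain ⟨t, ht⟩ := isCompact_univ.elim_finite_subcover (fun x : X => {y | d x y < 1})
    hopen (fun x _ => mem_iUnion.mpr ⟨x, by simp [(heq x x).mpr rfl]⟩)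
  have hfin : (Set.image2 d (↑t : Set X) ↑t).Finite :=
    t.finite_toSet.image2 _ t.finite_toSet
  obtain ⟨M0, hM0⟩ := hfin.bddAbove
  refine ⟨M0 + 2, fun x y => ?_⟩
  have hx := ht (mem_univ x)
  have hy := ht (mem_univ y)
  simp only [mem_iUnion, mem_setOf_eq, exists_prop] at hx hy
  obtain ⟨i, hi, hxi⟩ := hx
  obtain ⟨j, hj, hyj⟩ := hy
  have h1 : d i j ≤ M0 := hM0 (mem_image2_of_mem hi hj)
  have h2 := htri x i y
  have h3 := htri i j y
  have h4 : d x i = d i x := hsymm x i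
  linarith

lemma bddAbove_image2 {d : X → X → ℝ} {M : ℝ} (hM : ∀ x y, d x y ≤ M) (S T : Set X) :
    BddAbove (Set.image2 d S T) :=
  ⟨M, by rintro a ⟨u, -, v, -, rfl⟩; exact hM u v⟩

lemma dist_le_sdiam {d : X → X → ℝ} {M : ℝ} (hM : ∀ x y, d x y ≤ M) {S : Set X} {x y : X}
    (hx : x ∈ S) (hy : y ∈ S) : d x y ≤ sdiam d S :=
  le_csSup (bddAbove_image2 hM S S) (mem_image2_of_mem hx hy)

lemma sdiam_nonneg {d : X → X → ℝ} {M : ℝ} (hmet : IsMetricOn d) (hM : ∀ x y, d x y ≤ M)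
    {S : Set X} (hS : S.Nonempty) : 0 ≤ sdiam d S := by
  obtain ⟨x, hx⟩ := hS
  calc (0:ℝ) = d x x := ((hmet.2.1 x x).mpr rfl).symm
  _ ≤ _ := dist_le_sdiam hM hx hx

lemma sdist_le_dist {d : X → X → ℝ} (hmet : IsMetricOn d) {S T : Set X} {x y : X}
    (hx : x ∈ S) (hy : y ∈ T) : sdist d S T ≤ d x y :=
  csInf_le ⟨0, by rintro a ⟨u, -, v, -, rfl⟩; exact hmet.1 u v⟩ (mem_image2_of_mem hx hy)

/-! ### Cell structure facts -/

variable [TopologicalSpace X]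

lemma cells_cover (CS : CellStructure X) : ∀ n (x : X), ∃ E ∈ CS.cells n, x ∈ E := by
  intro n
  induction n with
  | zero => exact fun x => ⟨univ, by rw [CS.root]; rfl, mem_univ x⟩
  | succ n ih =>
    intro x
    obtain ⟨E, hE, hxE⟩ := ih x
    have h := CS.eq_sUnion_children n E hE
    rw [h] at hxE
    obtain ⟨E', ⟨hE', -⟩, hxE'⟩ := hxE
    exact ⟨E', hE', hxE'⟩

lemma cells_ancestor (CS : CellStructure X) :
    ∀ n (E : Set X), E ∈ CS.cells n → ∀ m, m ≤ n → ∃ A ∈ CS.cells m, E ⊆ A := by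
  intro n
  induction n with
  | zero =>
    intro E hE m hm
    have : m = 0 := Nat.le_zero.mp hm
    subst this
    exact ⟨E, hE, subset_rfl⟩
  | succ n ih =>
    intro E hE m hm
    by_cases hm' : m = n + 1
    · subst hm'; exact ⟨E, hE, subset_rfl⟩
    · have hmn : m ≤ n := by omega
      obtain ⟨P, hP, hEP⟩ := CS.exists_parent n E hE
      obtain ⟨A, hA, hPA⟩ := ih P hP m hmn
      exact ⟨A, hA, hEP.trans hPA⟩

lemma cell_nonempty (CS : CellStructure X) {n : ℕ} {E : Set X} (hE : E ∈ CS.cells n) :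
    E.Nonempty :=
  (CS.isConnected_cells n E hE).nonempty

lemma sdiam_cell_pos (CS : CellStructure X) {d : X → X → ℝ} {M r R C δ : ℝ}
    (hmet : IsMetricOn d) (hM : ∀ x y, d x y ≤ M)
    (hu : IsUndistortedWith CS.cells d r R C δ) {n : ℕ} {E : Set X}
    (hE : E ∈ CS.cells n) : 0 < sdiam d E := by
  obtain ⟨hr, hrR, hR, hC, hδ, hdec, hsep⟩ := id hu
  have hne := cell_nonempty CS hE
  have h0 : 0 ≤ sdiam d E := sdiam_nonneg hmet hM hne
  rcases h0.lt_or_eq with h | h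
  · exact h
  · exfalso
    have h1 := (hdec n n le_rfl E hE E hE (by simpa using hne)).1
    rw [← h] at h1
    simp only [Nat.sub_self, pow_zero, zero_div] at h1
    have : 0 < 1 / C := by positivity
    linarith

lemma decay_bounds (CS : CellStructure X) {d : X → X → ℝ} {M r R C δ : ℝ}
    (hmet : IsMetricOn d) (hM : ∀ x y, d x y ≤ M)
    (hu : IsUndistortedWith CS.cells d r R C δ) {m n : ℕ} {E E' : Set X} (hmn : m ≤ n)
    (hE : E ∈ CS.cells m) (hE' : E' ∈ CS.cells n) (hint : (E ∩ E').Nonempty) :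
    r ^ (n - m) / C * sdiam d E ≤ sdiam d E' ∧
      sdiam d E' ≤ C * R ^ (n - m) * sdiam d E := by
  have hpos := sdiam_cell_pos CS hmet hM hu hE
  obtain ⟨hr, hrR, hR, hC, hδ, hdec, hsep⟩ := id hu
  obtain ⟨h1, h2⟩ := hdec m n hmn E hE E' hE' hint
  exact ⟨(le_div_iff₀ hpos).mp h1, (div_le_iff₀ hpos).mp h2⟩

/-! ### The scale of a pair of points -/

def scaleSet (cells : ℕ → Set (Set X)) (x y : X) : Set ℕ :=
  {n | ∃ E ∈ cells n, ∃ F ∈ cells n, x ∈ E ∧ y ∈ F ∧ (E ∩ F).Nonempty}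

noncomputable def scale (cells : ℕ → Set (Set X)) (x y : X) : ℕ :=
  sSup (scaleSet cells x y)

lemma scaleSet_zero_mem (CS : CellStructure X) (x y : X) : 0 ∈ scaleSet CS.cells x y :=
  ⟨univ, by rw [CS.root]; rfl, univ, by rw [CS.root]; rfl, mem_univ x, mem_univ y,
    ⟨x, mem_univ x, mem_univ x⟩⟩

lemma scaleSet_bddAbove (CS : CellStructure X) {d : X → X → ℝ} {M r R C δ : ℝ}
    (hmet : IsMetricOn d) (hM : ∀ x y, d x y ≤ M)
    (hu : IsUndistortedWith CS.cells d r R C δ) {x y : X} (hxy : x ≠ y) :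
    BddAbove (scaleSet CS.cells x y) := by
  obtain ⟨hr, hrR, hR1, hC, hδ, hdec, hsep⟩ := id hu
  have hRpos : 0 < R := lt_of_lt_of_le hr hrR
  have huniv : univ ∈ CS.cells 0 := by rw [CS.root]; rfl
  have hDpos : 0 < sdiam d univ := sdiam_cell_pos CS hmet hM hu huniv
  set D := sdiam d univ with hD
  have hdxy : 0 < d x y := dist_pos hmet hxy
  have hPpos : 0 < (1 + C) * C * D := by positivity
  obtain ⟨n1, hn1⟩ := exists_pow_lt_of_lt_one (div_pos hdxy hPpos) hR1
  refine ⟨n1, fun n hn => ?_⟩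
  by_contra hcon
  push_neg at hcon
  obtain ⟨E, hE, F, hF, hxE, hyF, ⟨p, hpE, hpF⟩⟩ := hn
  have h1 : d x y ≤ sdiam d E + sdiam d F :=
    le_trans (hmet.2.2.2 x p y)
      (add_le_add (dist_le_sdiam hM hxE hpE) (dist_le_sdiam hM hpF hyF))
  have h2 : sdiam d F ≤ C * R ^ (n - n) * sdiam d E :=
    (decay_bounds CS hmet hM hu le_rfl hE hF ⟨p, hpE, hpF⟩).2
  have h3 : sdiam d E ≤ C * R ^ (n - 0) * D :=
    (decay_bounds CS hmet hM hu (Nat.zero_le n) huniv hE ⟨x, mem_univ x, hxE⟩).2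
  rw [Nat.sub_self, pow_zero, mul_one] at h2
  rw [Nat.sub_zero] at h3
  have hpow : R ^ n ≤ R ^ n1 := pow_le_pow_of_le_one hRpos.le hR1.le hcon.le
  have hn1' : R ^ n1 * ((1 + C) * C * D) < d x y := (lt_div_iff₀ hPpos).mp hn1
  have hEpos : 0 < sdiam d E := sdiam_cell_pos CS hmet hM hu hE
  nlinarith [mul_le_mul_of_nonneg_left h3 (by linarith : (0:ℝ) ≤ 1 + C),
    mul_le_mul_of_nonneg_left hpow (by positivity : (0:ℝ) ≤ (1 + C) * C * D)]

lemma le_scale {cells : ℕ → Set (Set X)} {x y : X}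
    (hbdd : BddAbove (scaleSet cells x y)) {n : ℕ} (hn : n ∈ scaleSet cells x y) :
    n ≤ scale cells x y :=
  le_csSup hbdd hn

lemma scale_mem (CS : CellStructure X) {d : X → X → ℝ} {M r R C δ : ℝ}
    (hmet : IsMetricOn d) (hM : ∀ x y, d x y ≤ M)
    (hu : IsUndistortedWith CS.cells d r R C δ) {x y : X} (hxy : x ≠ y) :
    scale CS.cells x y ∈ scaleSet CS.cells x y :=
  Nat.sSup_mem ⟨0, scaleSet_zero_mem CS x y⟩ (scaleSet_bddAbove CS hmet hM hu hxy)

/-! ### Distance comparison at the scale -/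

lemma dist_comp (CS : CellStructure X) {d : X → X → ℝ} {M r R C δ : ℝ}
    (hmet : IsMetricOn d) (hM : ∀ x y, d x y ≤ M)
    (hu : IsUndistortedWith CS.cells d r R C δ) {x y : X} (hxy : x ≠ y) {E : Set X}
    (hE : E ∈ CS.cells (scale CS.cells x y)) (hxE : x ∈ E) :
    δ * r / C * sdiam d E ≤ d x y ∧ d x y ≤ (1 + C) * C * sdiam d E := by
  have hbdd := scaleSet_bddAbove CS hmet hM hu hxy
  obtain ⟨hr, hrR, hR1, hC, hδ, hdec, hsep⟩ := id hu
  set N := scale CS.cells x y with hN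
  obtain ⟨E0, hE0, F0, hF0, hxE0, hyF0, ⟨p, hpE0, hpF0⟩⟩ := scale_mem CS hmet hM hu hxy
  have hE0pos : 0 < sdiam d E0 := sdiam_cell_pos CS hmet hM hu hE0
  have hEpos : 0 < sdiam d E := sdiam_cell_pos CS hmet hM hu hE
  have h1 : d x y ≤ sdiam d E0 + sdiam d F0 :=
    le_trans (hmet.2.2.2 x p y)
      (add_le_add (dist_le_sdiam hM hxE0 hpE0) (dist_le_sdiam hM hpF0 hyF0))
  have h2 : sdiam d F0 ≤ C * R ^ (N - N) * sdiam d E0 :=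
    (decay_bounds CS hmet hM hu le_rfl hE0 hF0 ⟨p, hpE0, hpF0⟩).2
  have h3 : sdiam d E0 ≤ C * R ^ (N - N) * sdiam d E :=
    (decay_bounds CS hmet hM hu le_rfl hE hE0 ⟨x, hxE, hxE0⟩).2
  rw [Nat.sub_self, pow_zero, mul_one] at h2 h3
  obtain ⟨E', hE', hxE'⟩ := cells_cover CS (N + 1) x
  obtain ⟨F', hF', hyF'⟩ := cells_cover CS (N + 1) y
  have hdisj : Disjoint E' F' := by
    rw [Set.disjoint_iff_inter_eq_empty]
    by_contra hne
    have hne' : (E' ∩ F').Nonempty := nonempty_iff_ne_empty.mpr hne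
    have hmem : N + 1 ∈ scaleSet CS.cells x y := ⟨E', hE', F', hF', hxE', hyF', hne'⟩
    have h7 : N + 1 ≤ N := le_scale hbdd hmem
    omega
  have h4 : δ * sdiam d E' ≤ sdist d E' F' := hsep (N + 1) E' hE' F' hF' hdisj
  have h5 : sdist d E' F' ≤ d x y := sdist_le_dist hmet hxE' hyF'
  have h6 : r ^ (N + 1 - N) / C * sdiam d E ≤ sdiam d E' :=
    (decay_bounds CS hmet hM hu (Nat.le_succ N) hE hE' ⟨x, hxE, hxE'⟩).1
  have hsub : N + 1 - N = 1 := by omega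
  rw [hsub, pow_one] at h6
  constructor
  · calc δ * r / C * sdiam d E = δ * (r / C * sdiam d E) := by ring
      _ ≤ δ * sdiam d E' := mul_le_mul_of_nonneg_left h6 hδ.le
      _ ≤ sdist d E' F' := h4
      _ ≤ d x y := h5
  · calc d x y ≤ sdiam d E0 + sdiam d F0 := h1
      _ ≤ sdiam d E0 + C * sdiam d E0 := by linarith
      _ = (1 + C) * sdiam d E0 := by ring
      _ ≤ (1 + C) * (C * sdiam d E) := mul_le_mul_of_nonneg_left h3 (by linarith)
      _ = (1 + C) * C * sdiam d E := by ring

/-! ### Cells are infinite; deep cells lie in a piece of a subdivision -/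

lemma cell_infinite [T1Space X] [PreconnectedSpace X] (CS : CellStructure X)
    {d : X → X → ℝ} {M r R C δ : ℝ} (hmet : IsMetricOn d) (hM : ∀ x y, d x y ≤ M)
    (hu : IsUndistortedWith CS.cells d r R C δ) {n : ℕ} {E : Set X}
    (hE : E ∈ CS.cells n) : E.Infinite := by
  by_contra h
  rw [Set.not_infinite] at h
  obtain ⟨p, hp⟩ := CS.interior_nonempty n E hE
  have hUopen : IsOpen (interior E \ (E \ {p})) :=
    isOpen_interior.sdiff ((h.subset diff_subset).isClosed)
  have hpU : p ∈ interior E \ (E \ {p}) := ⟨hp, fun hmem => hmem.2 rfl⟩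
  have hUsub : interior E \ (E \ {p}) ⊆ {p} := by
    rintro u ⟨hu1, hu2⟩
    by_contra hne
    exact hu2 ⟨interior_subset hu1, hne⟩
  have hUeq : interior E \ (E \ {p}) = {p} :=
    Subset.antisymm hUsub (singleton_subset_iff.mpr hpU)
  have hclopen : IsClopen ({p} : Set X) := ⟨isClosed_singleton, hUeq ▸ hUopen⟩
  rcases isClopen_iff.mp hclopen with h0 | huniv
  · exact absurd h0 (singleton_ne_empty p)
  · have hEp : E ⊆ {p} := huniv ▸ subset_univ E
    have hEeq : E = {p} :=
      (subset_singleton_iff_eq.mp hEp).resolve_left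
        (nonempty_iff_ne_empty.mp (cell_nonempty CS hE))
    have hpos := sdiam_cell_pos CS hmet hM hu hE
    rw [hEeq] at hpos
    have hz : sdiam d ({p} : Set X) = 0 := by
      unfold sdiam
      rw [Set.image2_singleton, csSup_singleton, (hmet.2.1 p p).mpr rfl]
    linarith

lemma deep_cell_in_piece (CS : CellStructure X)
    (hinf : ∀ n (E : Set X), E ∈ CS.cells n → E.Infinite)
    {k : ℕ} (EX : Fin k → ℕ × Set X)
    (hmem : ∀ i, (EX i).2 ∈ CS.cells (EX i).1)
    (hcov : (⋃ i, (EX i).2) = univ)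
    {n : ℕ} (hn : ∀ i, (EX i).1 ≤ n) {E : Set X} (hE : E ∈ CS.cells n) :
    ∃ i, E ⊆ (EX i).2 := by
  by_contra hcon
  push_neg at hcon
  have hfin : ∀ i, (E ∩ (EX i).2).Finite := by
    intro i
    obtain ⟨A, hA, hEA⟩ := cells_ancestor CS n E hE (EX i).1 (hn i)
    have hne : A ≠ (EX i).2 := by
      rintro rfl
      exact absurd hEA (hcon i)
    exact (CS.inter_finite _ A hA _ (hmem i) hne).subset
      (inter_subset_inter_left _ hEA)
  have heq : E = ⋃ i, (E ∩ (EX i).2) := by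
    rw [← inter_iUnion, hcov, inter_univ]
  have hfin' : E.Finite := heq ▸ Set.finite_iUnion hfin
  exact (hinf n E hE) hfin'

/-! ### Inverse of a cellular map -/

lemma cellular_inv [TopologicalSpace Y] {f : X → Y} {g : Y → X}
    (hgf : ∀ x, g (f x) = x) (hgc : Continuous g)
    {CSX : CellStructure X} {CSY : CellStructure Y} {m n : ℕ} {E : Set X} {M : Set Y}
    (h : CellularMap CSX CSY f m n E M) : CellularMap CSY CSX g n m M E := by
  obtain ⟨hE, hM, hinj, hcont, himg, hfwd, hbwd⟩ := h
  have hgimg : ∀ S : Set X, g '' (f '' S) = S := by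
    intro S
    rw [← image_comp]
    have : (g ∘ f) = id := funext hgf
    rw [this, image_id]
  have hginj : Set.InjOn g M := by
    rw [← himg]
    rintro u ⟨a, ha, rfl⟩ v ⟨b, hb, rfl⟩ huv
    rw [hgf, hgf] at huv
    rw [huv]
  refine ⟨hM, hE, hginj, hgc.continuousOn, by rw [← himg, hgimg], ?_, ?_⟩
  · intro k F' hF' hF'M
    obtain ⟨F, hF, hFE, hfF⟩ := hbwd k F' hF' hF'M
    rw [← hfF, hgimg]
    exact hF
  · intro k F hF hFE
    exact ⟨f '' F, hfwd k F hF hFE, by rw [← himg]; exact image_mono (f := f) hFE, hgimg F⟩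

/-! ### The scale transfers under piecewise cellular maps -/

lemma scale_transfer [TopologicalSpace Y]
    (CSX : CellStructure X) (CSY : CellStructure Y)
    {dX : X → X → ℝ} {dY : Y → Y → ℝ} {MX MY rX RX CX δX rY RY CY δY : ℝ}
    (hmetX : IsMetricOn dX) (hMX : ∀ x y, dX x y ≤ MX)
    (huX : IsUndistortedWith CSX.cells dX rX RX CX δX)
    (hmetY : IsMetricOn dY) (hMY : ∀ x y, dY x y ≤ MY)
    (huY : IsUndistortedWith CSY.cells dY rY RY CY δY)
    (hinfX : ∀ n (E : Set X), E ∈ CSX.cells n → E.Infinite)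
    {f : X → Y} (hfinj : Function.Injective f)
    {k : ℕ} (EX : Fin k → ℕ × Set X) (EY : Fin k → ℕ × Set Y)
    (hcovX : (⋃ i, (EX i).2) = univ)
    (hcm : ∀ i, CellularMap CSX CSY f (EX i).1 (EY i).1 (EX i).2 (EY i).2) :
    ∃ K : ℕ, ∀ x y : X, x ≠ y →
      scale CSX.cells x y ≤ scale CSY.cells (f x) (f y) + K := by
  classical
  set n0 := (Finset.univ : Finset (Fin k)).sup (fun i => (EX i).1) with hn0
  refine ⟨n0, fun x y hxy => ?_⟩
  set N := scale CSX.cells x y with hN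
  by_cases hcase : N ≤ n0
  · omega
  · push_neg at hcase
    obtain ⟨E, hE, F, hF, hxE, hyF, ⟨p, hpE, hpF⟩⟩ := scale_mem CSX hmetX hMX huX hxy
    have hile : ∀ i, (EX i).1 ≤ n0 := fun i =>
      Finset.le_sup (f := fun i => (EX i).1) (Finset.mem_univ i)
    have hnle : ∀ i, (EX i).1 ≤ N := fun i => le_trans (hile i) hcase.le
    obtain ⟨i, hEi⟩ := deep_cell_in_piece CSX hinfX EX (fun i => (hcm i).1) hcovX hnle hE
    obtain ⟨j, hFj⟩ := deep_cell_in_piece CSX hinfX EX (fun i => (hcm i).1) hcovX hnle hF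
    have hfE : f '' E ∈ CSY.cells ((EY i).1 + (N - (EX i).1)) := by
      refine (hcm i).2.2.2.2.2.1 (N - (EX i).1) E ?_ hEi
      rwa [Nat.add_sub_cancel' (hnle i)]
    have hfF : f '' F ∈ CSY.cells ((EY j).1 + (N - (EX j).1)) := by
      refine (hcm j).2.2.2.2.2.1 (N - (EX j).1) F ?_ hFj
      rwa [Nat.add_sub_cancel' (hnle j)]
    set li := (EY i).1 + (N - (EX i).1) with hli
    set lj := (EY j).1 + (N - (EX j).1) with hlj
    obtain ⟨A, hA, hfEA⟩ :=
      cells_ancestor CSY li (f '' E) hfE (min li lj) (min_le_left _ _)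
    obtain ⟨B, hB, hfFB⟩ :=
      cells_ancestor CSY lj (f '' F) hfF (min li lj) (min_le_right _ _)
    have hmemY : min li lj ∈ scaleSet CSY.cells (f x) (f y) :=
      ⟨A, hA, B, hB, hfEA ⟨x, hxE, rfl⟩, hfFB ⟨y, hyF, rfl⟩,
        ⟨f p, hfEA ⟨p, hpE, rfl⟩, hfFB ⟨p, hpF, rfl⟩⟩⟩
    have hbddY := scaleSet_bddAbove CSY hmetY hMY huY (fun h => hxy (hfinj h))
    have hle : min li lj ≤ scale CSY.cells (f x) (f y) := le_scale hbddY hmemY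
    have hi0 : (EX i).1 ≤ n0 := hile i
    have hj0 : (EX j).1 ≤ n0 := hile j
    have h2 : N ≤ min li lj + n0 := by
      rcases le_total li lj with h | h
      · rw [min_eq_left h]; omega
      · rw [min_eq_right h]; omega
    omega

/-! ### Two-sided geometric bounds -/

noncomputable def bpow (u v : ℝ) (j : ℤ) : ℝ := if 0 ≤ j then u ^ j else v ^ j

lemma bpow_pos {u v : ℝ} (hu : 0 < u) (hv : 0 < v) (j : ℤ) : 0 < bpow u v j := by
  unfold bpow; split
  · exact zpow_pos hu j
  · exact zpow_pos hv j

lemma zpow_le_one_aux {u : ℝ} (hu : 0 < u) (hu1 : u ≤ 1) {m : ℤ} (hm : 0 ≤ m) :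
    u ^ m ≤ 1 := by
  obtain ⟨n, rfl⟩ := Int.eq_ofNat_of_zero_le hm
  rw [zpow_natCast]
  exact pow_le_one₀ hu.le hu1

lemma one_le_zpow_aux {u : ℝ} (hu : 0 < u) (hu1 : u ≤ 1) {m : ℤ} (hm : m ≤ 0) :
    1 ≤ u ^ m := by
  have h1 : u ^ m * u ^ (-m) = 1 := by
    rw [← zpow_add₀ hu.ne']
    simp
  nlinarith [zpow_pos hu m, zpow_le_one_aux hu hu1 (neg_nonneg.mpr hm)]

lemma zpow_le_zpow_aux {u : ℝ} (hu : 0 < u) (hu1 : u ≤ 1) {a b : ℤ} (hab : a ≤ b) :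
    u ^ b ≤ u ^ a := by
  have hb : b = a + (b - a) := by ring
  rw [hb, zpow_add₀ hu.ne']
  nlinarith [zpow_pos hu a, zpow_le_one_aux hu hu1 (sub_nonneg.mpr hab)]

lemma bpow_antitone {u v : ℝ} (hv : 0 < v) (hvu : v ≤ u) (hu1 : u ≤ 1) :
    Antitone (bpow u v) := by
  have hu : 0 < u := lt_of_lt_of_le hv hvu
  have hv1 : v ≤ 1 := le_trans hvu hu1
  intro a b hab
  unfold bpow
  split_ifs with h1 h2 h2
  · exact zpow_le_zpow_aux hu hu1 hab
  · exact le_trans (zpow_le_one_aux hu hu1 h1) (one_le_zpow_aux hv hv1 (not_le.mp h2).le)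
  · omega
  · exact zpow_le_zpow_aux hv hv1 hab

lemma zpow_neg_le_aux {u v : ℝ} (hv : 0 < v) (hvu : v ≤ u) (K : ℕ) :
    u ^ (-(K:ℤ)) ≤ v ^ (-(K:ℤ)) := by
  have hu : 0 < u := lt_of_lt_of_le hv hvu
  rw [zpow_neg, zpow_neg, zpow_natCast, zpow_natCast]
  exact inv_anti₀ (pow_pos hv K) (pow_le_pow_left₀ hv.le hvu K)

lemma bpow_shift {u v : ℝ} (hv : 0 < v) (hvu : v ≤ u) (hu1 : u ≤ 1) (K : ℕ) (j : ℤ) :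
    bpow u v (j - K) ≤ v ^ (-(K:ℤ)) * bpow u v j := by
  have hu : 0 < u := lt_of_lt_of_le hv hvu
  have hv1 : v ≤ 1 := le_trans hvu hu1
  unfold bpow
  split_ifs with h1 h2 h2
  · -- 0 ≤ j - K, 0 ≤ j : u^(j-K) = u^j * u^(-K) ≤ v^(-K) * u^j
    rw [sub_eq_add_neg, zpow_add₀ hu.ne']
    have := zpow_neg_le_aux hv hvu K
    nlinarith [zpow_pos hu j, zpow_pos hv (-(K:ℤ))]
  · omega
  · -- j - K < 0, 0 ≤ j : v^(j-K) = v^(-K) * v^j ≤ v^(-K) * u^j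
    rw [sub_eq_add_neg, zpow_add₀ hv.ne']
    have hj : v ^ j ≤ u ^ j := by
      obtain ⟨n, rfl⟩ := Int.eq_ofNat_of_zero_le h2
      rw [zpow_natCast, zpow_natCast]
      exact pow_le_pow_left₀ hv.le hvu n
    nlinarith [zpow_pos hv (-(K:ℤ))]
  · -- both negative: equality
    rw [sub_eq_add_neg, zpow_add₀ hv.ne']
    ring_nf
    exact le_refl _

lemma bpow_bridge {rX RX rY RY : ℝ} (hrX : 0 < rX) (hrRX : rX ≤ RX) (hRX1 : RX < 1)
    (hrY : 0 < rY) (hrRY : rY ≤ RY) (hRY1 : RY < 1) (j : ℤ) :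
    bpow RY rY j ≤ max (bpow rX RX j ^ (Real.log RY / Real.log rX))
      (bpow rX RX j ^ (Real.log rY / Real.log RX)) := by
  have hRXpos : 0 < RX := lt_of_lt_of_le hrX hrRX
  have hRYpos : 0 < RY := lt_of_lt_of_le hrY hrRY
  have hlogrX : Real.log rX < 0 := Real.log_neg hrX (lt_of_le_of_lt hrRX hRX1)
  have hlogRX : Real.log RX < 0 := Real.log_neg hRXpos hRX1
  unfold bpow
  split_ifs with h
  · refine le_trans (le_of_eq ?_) (le_max_left _ _)
    rw [Real.rpow_def_of_pos (zpow_pos hrX j), Real.log_zpow,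
      show (j:ℝ) * Real.log rX * (Real.log RY / Real.log rX) = (j:ℝ) * Real.log RY by
        field_simp [ne_of_lt hlogrX],
      ← Real.log_zpow, Real.exp_log (zpow_pos hRYpos j)]
  · refine le_trans (le_of_eq ?_) (le_max_right _ _)
    rw [Real.rpow_def_of_pos (zpow_pos hRXpos j), Real.log_zpow,
      show (j:ℝ) * Real.log RX * (Real.log rY / Real.log RX) = (j:ℝ) * Real.log rY by
        field_simp [ne_of_lt hlogRX],
      ← Real.log_zpow, Real.exp_log (zpow_pos hrY j)]

end Stmt12Aux

open Stmt12Aux in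
/-- Any piecewise cellular homeomorphism between finitely ramified
fractals with undistorted metrics is a quasisymmetry. -/
theorem stmt12 {X Y : Type*} [TopologicalSpace X] [CompactSpace X] [ConnectedSpace X]
    [TopologicalSpace.MetrizableSpace X]
    [TopologicalSpace Y] [CompactSpace Y] [ConnectedSpace Y]
    [TopologicalSpace.MetrizableSpace Y]
    (CSX : CellStructure X) (CSY : CellStructure Y)
    (dX : X → X → ℝ) (dY : Y → Y → ℝ)
    (hmetX : IsMetricOn dX) (htopX : InducesTopology dX) (hundX : IsUndistorted CSX.cells dX)
    (hmetY : IsMetricOn dY) (htopY : InducesTopology dY) (hundY : IsUndistorted CSY.cells dY)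
    (f : X → Y) (hf : IsHomeomorph f) (hpc : PiecewiseCellular CSX CSY f) :
    ∃ η : ℝ → ℝ, IsQSGauge η ∧ QSIneq dX dY f η := by
  classical
  obtain ⟨rX, RX, CX, δX, huX⟩ := hundX
  obtain ⟨rY, RY, CY, δY, huY⟩ := hundY
  obtain ⟨hrX, hrRX, hRX1, hCX, hδX, hdecX, hsepX⟩ := id huX
  obtain ⟨hrY, hrRY, hRY1, hCY, hδY, hdecY, hsepY⟩ := id huY
  have hRXpos : 0 < RX := lt_of_lt_of_le hrX hrRX
  have hRYpos : 0 < RY := lt_of_lt_of_le hrY hrRY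
  have hCX0 : (0:ℝ) < CX := lt_of_lt_of_le zero_lt_one hCX
  have hCY0 : (0:ℝ) < CY := lt_of_lt_of_le zero_lt_one hCY
  obtain ⟨MX, hMX⟩ := exists_bound hmetX htopX
  obtain ⟨MY, hMY⟩ := exists_bound hmetY htopY
  have hinfX : ∀ n (E : Set X), E ∈ CSX.cells n → E.Infinite :=
    fun n E hE => cell_infinite CSX hmetX hMX huX hE
  have hinfY : ∀ n (E : Set Y), E ∈ CSY.cells n → E.Infinite :=
    fun n E hE => cell_infinite CSY hmetY hMY huY hE
  obtain ⟨k, EXp, EYp, hEXmem, hEYmem, hnoX, hnoY, hcovX, hcovY, hcm⟩ := hpc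
  set e := hf.homeomorph f with he
  have hef : ∀ x, e x = f x := fun x => rfl
  set g : Y → X := fun y => e.symm y with hgdef
  have hgf : ∀ x, g (f x) = x := fun x => by
    rw [hgdef]
    show e.symm (f x) = x
    rw [← hef x]
    exact e.symm_apply_apply x
  have hfg : ∀ y, f (g y) = y := fun y => by
    rw [← hef (g y)]
    exact e.apply_symm_apply y
  have hgc : Continuous g := e.symm.continuous
  have hfinj : Function.Injective f := hf.bijective.injective
  have hginj : Function.Injective g := fun u v h => by rw [← hfg u, h, hfg v]
  obtain ⟨K1, hK1⟩ := scale_transfer CSX CSY hmetX hMX huX hmetY hMY huY hinfX hfinj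
    EXp EYp hcovX hcm
  obtain ⟨K2, hK2⟩ := scale_transfer CSY CSX hmetY hMY huY hmetX hMX huX hinfY hginj
    EYp EXp hcovY (fun i => cellular_inv hgf hgc (hcm i))
  -- constants
  set c0 := δX * rX / CX / ((1 + CX) * CX * CX) with hc0def
  have hc0pos : 0 < c0 := by rw [hc0def]; positivity
  set cY0 := (1 + CY) * CY * CY * CY / (δY * rY) with hcY0def
  have hcY0pos : 0 < cY0 := by rw [hcY0def]; positivity
  set c2 := cY0 * rY ^ (-((K1 + K2 : ℕ) : ℤ)) with hc2def
  have hc2pos : 0 < c2 := by rw [hc2def]; positivity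
  have hlogrX : Real.log rX < 0 := Real.log_neg hrX (lt_of_le_of_lt hrRX hRX1)
  have hlogRX : Real.log RX < 0 := Real.log_neg hRXpos hRX1
  have hlogRY : Real.log RY < 0 := Real.log_neg hRYpos hRY1
  have hlogrY : Real.log rY < 0 := Real.log_neg hrY (lt_of_le_of_lt hrRY hRY1)
  set α1 := Real.log RY / Real.log rX with hα1def
  set α2 := Real.log rY / Real.log RX with hα2def
  have hα1pos : 0 < α1 := by rw [hα1def]; exact div_pos_iff.mpr (Or.inr ⟨hlogRY, hlogrX⟩)
  have hα2pos : 0 < α2 := by rw [hα2def]; exact div_pos_iff.mpr (Or.inr ⟨hlogrY, hlogRX⟩)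
  set η : ℝ → ℝ := fun s => c2 * max ((s / c0) ^ α1) ((s / c0) ^ α2) with hηdef
  have hcont : Continuous η := by
    have h1 : Continuous fun x : ℝ => x ^ α1 := continuous_iff_continuousAt.mpr
      (fun x => Real.continuousAt_rpow_const x α1 (Or.inr hα1pos.le))
    have h2 : Continuous fun x : ℝ => x ^ α2 := continuous_iff_continuousAt.mpr
      (fun x => Real.continuousAt_rpow_const x α2 (Or.inr hα2pos.le))
    have hdiv : Continuous fun s : ℝ => s / c0 := continuous_id.div_const c0
    exact continuous_const.mul ((h1.comp hdiv).max (h2.comp hdiv))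
  have hη0 : η 0 = 0 := by
    rw [hηdef]
    show c2 * max ((0 / c0) ^ α1) ((0 / c0) ^ α2) = 0
    rw [zero_div, Real.zero_rpow hα1pos.ne', Real.zero_rpow hα2pos.ne', max_self, mul_zero]
  have hmono : StrictMonoOn η (Set.Ici 0) := by
    intro s hs t ht hst
    have hs' : 0 ≤ s / c0 := div_nonneg (mem_Ici.mp hs) hc0pos.le
    have hlt : s / c0 < t / c0 := by gcongr
    exact mul_lt_mul_of_pos_left
      (max_lt_max (Real.rpow_lt_rpow hs' hlt hα1pos) (Real.rpow_lt_rpow hs' hlt hα2pos)) hc2pos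
  have hmaps : Set.MapsTo η (Set.Ici 0) (Set.Ici 0) := by
    intro s hs
    exact mem_Ici.mpr (mul_nonneg hc2pos.le
      (le_trans (Real.rpow_nonneg (div_nonneg (mem_Ici.mp hs) hc0pos.le) α1) (le_max_left _ _)))
  have hsurj : Set.SurjOn η (Set.Ici 0) (Set.Ici 0) := by
    intro u hu
    have hu0 : 0 ≤ u := mem_Ici.mp hu
    have hw : 0 < u / c2 + 1 := by
      have : 0 ≤ u / c2 := div_nonneg hu0 hc2pos.le
      linarith
    set s0 := c0 * (u / c2 + 1) ^ α2⁻¹ with hs0def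
    have hs0 : 0 ≤ s0 := by
      rw [hs0def]
      exact mul_nonneg hc0pos.le (Real.rpow_nonneg hw.le _)
    have hdiv0 : s0 / c0 = (u / c2 + 1) ^ α2⁻¹ := by
      rw [hs0def, mul_comm, mul_div_assoc, div_self hc0pos.ne', mul_one]
    have hpow : ((u / c2 + 1) ^ α2⁻¹) ^ α2 = u / c2 + 1 := by
      rw [← Real.rpow_mul hw.le, inv_mul_cancel₀ hα2pos.ne', Real.rpow_one]
    have hηs0 : u ≤ η s0 := by
      have hkey : (s0 / c0) ^ α2 = u / c2 + 1 := by rw [hdiv0, hpow]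
      have h1 : c2 * (u / c2 + 1) = u + c2 := by
        field_simp
      calc u ≤ c2 * (u / c2 + 1) := by rw [h1]; linarith
        _ ≤ c2 * max ((s0 / c0) ^ α1) ((s0 / c0) ^ α2) := by
            refine mul_le_mul_of_nonneg_left ?_ hc2pos.le
            rw [hkey]
            exact le_max_of_le_right le_rfl
        _ = η s0 := rfl
    obtain ⟨s, hsmem, hsval⟩ := intermediate_value_Icc hs0 hcont.continuousOn
      ⟨by rw [hη0]; exact hu0, hηs0⟩
    exact ⟨s, mem_Ici.mpr hsmem.1, hsval⟩
  refine ⟨η, ⟨hcont.continuousOn, hmono, hη0, hmaps, hsurj⟩, ?_⟩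
  -- the quasisymmetry inequality
  intro a b z hab haz hbz
  have hfab : f a ≠ f b := fun h => hab (hfinj h)
  have hfaz : f a ≠ f z := fun h => haz (hfinj h)
  set N1 := scale CSX.cells a b with hN1
  set N2 := scale CSX.cells a z with hN2
  set N1' := scale CSY.cells (f a) (f b) with hN1'
  set N2' := scale CSY.cells (f a) (f z) with hN2'
  obtain ⟨E1, hE1, haE1⟩ := cells_cover CSX N1 a
  obtain ⟨E2, hE2, haE2⟩ := cells_cover CSX N2 a
  obtain ⟨F1, hF1, haF1⟩ := cells_cover CSY N1' (f a)
  obtain ⟨F2, hF2, haF2⟩ := cells_cover CSY N2' (f a)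
  have hd1 := dist_comp CSX hmetX hMX huX hab hE1 haE1
  have hd2 := dist_comp CSX hmetX hMX huX haz hE2 haE2
  have hd1' := dist_comp CSY hmetY hMY huY hfab hF1 haF1
  have hd2' := dist_comp CSY hmetY hMY huY hfaz hF2 haF2
  have hΔ1 : 0 < sdiam dX E1 := sdiam_cell_pos CSX hmetX hMX huX hE1
  have hΔ2 : 0 < sdiam dX E2 := sdiam_cell_pos CSX hmetX hMX huX hE2
  have hΔ1' : 0 < sdiam dY F1 := sdiam_cell_pos CSY hmetY hMY huY hF1
  have hΔ2' : 0 < sdiam dY F2 := sdiam_cell_pos CSY hmetY hMY huY hF2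
  have hdab : 0 < dX a b := dist_pos hmetX hab
  have hdaz : 0 < dX a z := dist_pos hmetX haz
  have hdfab : 0 < dY (f a) (f b) := dist_pos hmetY hfab
  have hdfaz : 0 < dY (f a) (f z) := dist_pos hmetY hfaz
  set j : ℤ := (N1 : ℤ) - N2 with hjd
  set j' : ℤ := (N1' : ℤ) - N2' with hj'd
  -- comparison of cell diameters on the X side
  have hBX : bpow rX RX j / CX * sdiam dX E2 ≤ sdiam dX E1 := by
    rcases le_or_gt N2 N1 with h | h
    · have hdb := (decay_bounds CSX hmetX hMX huX h hE2 hE1 ⟨a, haE2, haE1⟩).1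
      have hb : bpow rX RX j = rX ^ (N1 - N2) := by
        unfold bpow
        rw [if_pos (by omega : (0:ℤ) ≤ j), show j = ((N1 - N2 : ℕ) : ℤ) by omega, zpow_natCast]
      rw [hb]
      exact hdb
    · have hdb := (decay_bounds CSX hmetX hMX huX h.le hE1 hE2 ⟨a, haE1, haE2⟩).2
      have hP : (0:ℝ) < RX ^ (N2 - N1) := pow_pos hRXpos _
      have hb : bpow rX RX j = (RX ^ (N2 - N1))⁻¹ := by
        unfold bpow
        rw [if_neg (by omega), show j = -((N2 - N1 : ℕ) : ℤ) by omega, zpow_neg, zpow_natCast]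
      rw [hb, div_mul_eq_mul_div, div_le_iff₀ hCX0]
      calc (RX ^ (N2 - N1))⁻¹ * sdiam dX E2
          ≤ (RX ^ (N2 - N1))⁻¹ * (CX * RX ^ (N2 - N1) * sdiam dX E1) :=
            mul_le_mul_of_nonneg_left hdb (inv_nonneg.mpr hP.le)
        _ = ((RX ^ (N2 - N1))⁻¹ * RX ^ (N2 - N1)) * (CX * sdiam dX E1) := by ring
        _ = sdiam dX E1 * CX := by rw [inv_mul_cancel₀ hP.ne']; ring
  -- comparison of cell diameters on the Y side
  have hBY : sdiam dY F1 ≤ CY * bpow RY rY j' * sdiam dY F2 := by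
    rcases le_or_gt N2' N1' with h | h
    · have hdb := (decay_bounds CSY hmetY hMY huY h hF2 hF1 ⟨f a, haF2, haF1⟩).2
      have hb : bpow RY rY j' = RY ^ (N1' - N2') := by
        unfold bpow
        rw [if_pos (by omega : (0:ℤ) ≤ j'), show j' = ((N1' - N2' : ℕ) : ℤ) by omega,
          zpow_natCast]
      rw [hb]
      exact hdb
    · have hdb := (decay_bounds CSY hmetY hMY huY h.le hF1 hF2 ⟨f a, haF1, haF2⟩).1
      have hP : (0:ℝ) < rY ^ (N2' - N1') := pow_pos hrY _
      have hb : bpow RY rY j' = (rY ^ (N2' - N1'))⁻¹ := by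
        unfold bpow
        rw [if_neg (by omega), show j' = -((N2' - N1' : ℕ) : ℤ) by omega, zpow_neg, zpow_natCast]
      rw [hb]
      calc sdiam dY F1
          = (CY * (rY ^ (N2' - N1'))⁻¹) * (rY ^ (N2' - N1') / CY * sdiam dY F1) := by
            field_simp
        _ ≤ (CY * (rY ^ (N2' - N1'))⁻¹) * sdiam dY F2 := by
            refine mul_le_mul_of_nonneg_left hdb ?_
            positivity
        _ = CY * (rY ^ (N2' - N1'))⁻¹ * sdiam dY F2 := by ring
  -- the distance ratio bounds
  have hXlow : c0 * bpow rX RX j * dX a z ≤ dX a b := by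
    have hBpos := bpow_pos hrX hRXpos j
    have hstep : c0 * bpow rX RX j * ((1 + CX) * CX * sdiam dX E2)
        = δX * rX / CX * (bpow rX RX j / CX * sdiam dX E2) := by
      rw [hc0def]
      field_simp
    calc c0 * bpow rX RX j * dX a z
        ≤ c0 * bpow rX RX j * ((1 + CX) * CX * sdiam dX E2) :=
          mul_le_mul_of_nonneg_left hd2.2 (mul_nonneg hc0pos.le hBpos.le)
      _ = δX * rX / CX * (bpow rX RX j / CX * sdiam dX E2) := hstep
      _ ≤ δX * rX / CX * sdiam dX E1 := by
          refine mul_le_mul_of_nonneg_left hBX ?_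
          positivity
      _ ≤ dX a b := hd1.1
  have hX : c0 * bpow rX RX j ≤ dX a b / dX a z := (le_div_iff₀ hdaz).mpr hXlow
  have hY : dY (f a) (f b) / dY (f a) (f z) ≤ cY0 * bpow RY rY j' := by
    have hBpos := bpow_pos hRYpos hrY j'
    rw [div_le_iff₀ hdfaz]
    have hstep : (1 + CY) * CY * (CY * bpow RY rY j' * sdiam dY F2)
        = (cY0 * bpow RY rY j') * (δY * rY / CY * sdiam dY F2) := by
      rw [hcY0def]
      field_simp
    calc dY (f a) (f b)
        ≤ (1 + CY) * CY * sdiam dY F1 := hd1'.2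
      _ ≤ (1 + CY) * CY * (CY * bpow RY rY j' * sdiam dY F2) := by
          refine mul_le_mul_of_nonneg_left hBY ?_
          positivity
      _ = (cY0 * bpow RY rY j') * (δY * rY / CY * sdiam dY F2) := hstep
      _ ≤ (cY0 * bpow RY rY j') * dY (f a) (f z) :=
          mul_le_mul_of_nonneg_left hd2'.1 (mul_nonneg hcY0pos.le hBpos.le)
  -- transfer the scales
  have hK1' : N1 ≤ N1' + K1 := hK1 a b hab
  have hK2' : N2' ≤ N2 + K2 := by
    have h := hK2 (f a) (f z) hfaz
    rwa [hgf a, hgf z] at h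
  have hjj : j - ((K1 + K2 : ℕ) : ℤ) ≤ j' := by omega
  have hchain : bpow RY rY j' ≤ rY ^ (-((K1 + K2 : ℕ) : ℤ)) * bpow RY rY j :=
    le_trans (bpow_antitone hrY hrRY hRY1.le hjj) (bpow_shift hrY hrRY hRY1.le (K1 + K2) j)
  have hBXpos := bpow_pos hrX hRXpos j
  have hbr : bpow RY rY j ≤ max (bpow rX RX j ^ α1) (bpow rX RX j ^ α2) :=
    bpow_bridge hrX hrRX hRX1 hrY hrRY hRY1 j
  have hBle : bpow rX RX j ≤ dX a b / dX a z / c0 := by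
    rw [le_div_iff₀ hc0pos]
    linarith [hX]
  have hmax : max (bpow rX RX j ^ α1) (bpow rX RX j ^ α2)
      ≤ max ((dX a b / dX a z / c0) ^ α1) ((dX a b / dX a z / c0) ^ α2) :=
    max_le_max (Real.rpow_le_rpow hBXpos.le hBle hα1pos.le)
      (Real.rpow_le_rpow hBXpos.le hBle hα2pos.le)
  calc dY (f a) (f b) / dY (f a) (f z)
      ≤ cY0 * bpow RY rY j' := hY
    _ ≤ cY0 * (rY ^ (-((K1 + K2 : ℕ) : ℤ)) * bpow RY rY j) :=
        mul_le_mul_of_nonneg_left hchain hcY0pos.le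
    _ = c2 * bpow RY rY j := by rw [hc2def]; ring
    _ ≤ c2 * max ((dX a b / dX a z / c0) ^ α1) ((dX a b / dX a z / c0) ^ α2) :=
        mul_le_mul_of_nonneg_left (le_trans hbr hmax) hc2pos.le
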